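/- Let E, J, R ∈ ℝ^{n×n} with E^T = E positive semidefinite, J = −J^T, R = R^T positive semidefinite, and suppose the nullspaces satisfy N(E) ∩ N(J − R) = {0}. Then for every h > 0, the matrix E − (h/2)(J − R) is invertible, and the implicit midpoint step x_{n+1} := C(E, (h/2)(J − R)) x_n applied to the homogeneous pH-DAE E ẋ = (J − R)x dissipates the energy: x_{n+1}^T E x_{n+1} ≤ x_n^T E x_n for every x_n ∈ ℝ^n. -/

import Mathlib

open Matrix

lemma skew_dot_self {n : ℕ} {J : Matrix (Fin n) (Fin n) ℝ} (hJ : J = -Jᵀ)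
    (v : Fin n → ℝ) : v ⬝ᵥ J *ᵥ v = 0 := by
  have h1 : v ⬝ᵥ J *ᵥ v = (Jᵀ *ᵥ v) ⬝ᵥ v := by
    rw [dotProduct_mulVec, ← mulVec_transpose]
  have h2 : Jᵀ = -J := by nth_rewrite 2 [hJ]; rw [neg_neg]
  rw [h2, neg_mulVec, neg_dotProduct] at h1
  have h3 : (J *ᵥ v) ⬝ᵥ v = v ⬝ᵥ (J *ᵥ v) := dotProduct_comm _ _
  linarith

lemma sym_dot_swap {n : ℕ} {E : Matrix (Fin n) (Fin n) ℝ} (hE : Eᵀ = E)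
    (v w : Fin n → ℝ) : v ⬝ᵥ E *ᵥ w = w ⬝ᵥ E *ᵥ v := by
  rw [dotProduct_mulVec, ← mulVec_transpose, hE, dotProduct_comm]

/-- For `E` symmetric positive semidefinite, `J` skew-symmetric, `R` symmetric
positive semidefinite, with trivially intersecting nullspaces of `E` and `J - R`,
the implicit midpoint step for `E ẋ = (J - R) x` is well-defined for every `h > 0`
and dissipates the energy: with `x₁ = C(E, (h/2)(J-R)) x₀` one has
`x₁ᵀ E x₁ ≤ x₀ᵀ E x₀`. -/
theorem implicit_midpoint_energy_dissipation {n : ℕ}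
    (E J R : Matrix (Fin n) (Fin n) ℝ)
    (hE : Eᵀ = E) (hEpsd : E.PosSemidef) (hJ : J = -Jᵀ) (hR : Rᵀ = R) (hRpsd : R.PosSemidef)
    (hker : ∀ v : Fin n → ℝ, E.mulVec v = 0 → (J - R).mulVec v = 0 → v = 0) :
    ∀ h : ℝ, 0 < h →
      IsUnit (E - (h / 2) • (J - R)) ∧
      ∀ x₀ : Fin n → ℝ,
        (((E - (h / 2) • (J - R))⁻¹ * (E + (h / 2) • (J - R))).mulVec x₀) ⬝ᵥ
            E.mulVec (((E - (h / 2) • (J - R))⁻¹ * (E + (h / 2) • (J - R))).mulVec x₀) ≤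
          x₀ ⬝ᵥ E.mulVec x₀ := by
  intro h hh
  set M : Matrix (Fin n) (Fin n) ℝ := E - (h / 2) • (J - R) with hM
  set N : Matrix (Fin n) (Fin n) ℝ := E + (h / 2) • (J - R) with hN
  have hh2 : 0 < h / 2 := by linarith
  -- kernel of M is trivial
  have hkerM : ∀ v : Fin n → ℝ, M *ᵥ v = 0 → v = 0 := by
    intro v hv
    have hquad : v ⬝ᵥ M *ᵥ v = 0 := by rw [hv, dotProduct_zero]
    have hEv : (0:ℝ) ≤ v ⬝ᵥ E *ᵥ v := by simpa using hEpsd.dotProduct_mulVec_nonneg v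
    have hRv : (0:ℝ) ≤ v ⬝ᵥ R *ᵥ v := by simpa using hRpsd.dotProduct_mulVec_nonneg v
    have hexp : v ⬝ᵥ M *ᵥ v = v ⬝ᵥ E *ᵥ v + (h / 2) * (v ⬝ᵥ R *ᵥ v) := by
      rw [hM, sub_mulVec, smul_mulVec, dotProduct_sub, dotProduct_smul,
        sub_mulVec, dotProduct_sub, skew_dot_self hJ v, smul_eq_mul]
      ring
    have hE0 : v ⬝ᵥ E *ᵥ v = 0 := by nlinarith
    have hR0 : v ⬝ᵥ R *ᵥ v = 0 := by nlinarith
    have hEv0 : E *ᵥ v = 0 := by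
      have := (hEpsd.dotProduct_mulVec_zero_iff v).mp (by simpa using hE0)
      simpa using this
    have hJRv0 : (J - R) *ᵥ v = 0 := by
      have : (h / 2) • ((J - R) *ᵥ v) = 0 := by
        have := hv
        rw [hM, sub_mulVec, smul_mulVec, hEv0, zero_sub, neg_eq_zero] at this
        exact this
      have hne : (h / 2) ≠ 0 := ne_of_gt hh2
      exact (smul_eq_zero.mp this).resolve_left hne
    exact hker v hEv0 hJRv0
  have hinj : Function.Injective M.mulVec := by
    intro u v huv
    have : M *ᵥ (u - v) = 0 := by rw [mulVec_sub, huv, sub_self]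
    have := hkerM _ this
    exact sub_eq_zero.mp this
  have hu : IsUnit M := mulVec_injective_iff_isUnit.mp hinj
  refine ⟨hu, ?_⟩
  intro x₀
  set x₁ : Fin n → ℝ := (M⁻¹ * N) *ᵥ x₀ with hx₁
  have hdet : IsUnit M.det := (isUnit_iff_isUnit_det M).mp hu
  have hMx₁ : M *ᵥ x₁ = N *ᵥ x₀ := by
    rw [hx₁, mulVec_mulVec, ← Matrix.mul_assoc, Matrix.mul_nonsing_inv M hdet,
      Matrix.one_mul]
  -- E (x₁ - x₀) = (h/2)(J - R)(x₁ + x₀)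
  have hmid : E *ᵥ (x₁ - x₀) = (h / 2) • ((J - R) *ᵥ (x₁ + x₀)) := by
    have h1 : E *ᵥ x₁ - (h / 2) • (J *ᵥ x₁ - R *ᵥ x₁)
        = E *ᵥ x₀ + (h / 2) • (J *ᵥ x₀ - R *ᵥ x₀) := by
      have h0 := hMx₁
      simp only [hM, hN, sub_mulVec, add_mulVec, smul_mulVec] at h0
      exact h0
    funext i
    have := congrFun h1 i
    simp only [mulVec_sub, mulVec_add, sub_mulVec, smul_add, smul_sub, Pi.sub_apply,
      Pi.add_apply, Pi.smul_apply, smul_eq_mul] at this ⊢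
    linarith
  set s : Fin n → ℝ := x₁ + x₀ with hs
  have hkey : x₁ ⬝ᵥ E *ᵥ x₁ - x₀ ⬝ᵥ E *ᵥ x₀ = s ⬝ᵥ E *ᵥ (x₁ - x₀) := by
    have hsym := sym_dot_swap hE x₀ x₁
    rw [hs, mulVec_sub, dotProduct_sub, add_dotProduct, add_dotProduct]
    linarith
  have hRs : (0:ℝ) ≤ s ⬝ᵥ R *ᵥ s := by simpa using hRpsd.dotProduct_mulVec_nonneg s
  have hfin : s ⬝ᵥ E *ᵥ (x₁ - x₀) = -(h / 2) * (s ⬝ᵥ R *ᵥ s) := by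
    rw [hmid, dotProduct_smul, sub_mulVec, dotProduct_sub, skew_dot_self hJ s,
      smul_eq_mul]
    ring
  have : x₁ ⬝ᵥ E *ᵥ x₁ - x₀ ⬝ᵥ E *ᵥ x₀ ≤ 0 := by
    rw [hkey, hfin]
    nlinarith
  simpa [hx₁, hM, hN] using this
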